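/- Let N ≥ 1, D = 3N, δ > 0, and f₁ ∈ L¹_loc(ℝ³). Then for every x = (x_1,…,x_N) ∈ ℝ^D and every r > 0 there is a constant C_N (independent of f₁, x, r) such that Σ_{j=1}^N ∫_{B_r(0) ⊂ ℝ^D} |f₁(y_j + x_j)| / |y|^{D−2+δ} dy ≤ C_N Σ_{j=1}^N ∫_{B_r(x_j) ⊂ ℝ³} |f₁(y)| / |y − x_j|^{1+δ} dy. Consequently, if f₁ ∈ K^{3,δ}_loc, then the function x ↦ Σ_{j=1}^N f₁(x_j) belongs to K^{D,δ}_loc. -/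

import Mathlib

noncomputable section
open MeasureTheory Metric Filter Set
open scoped ENNReal

/-- Three-dimensional Euclidean space. -/
abbrev R3 : Type := EuclideanSpace ℝ (Fin 3)

/-- Configuration space of `N` particles in `ℝ³`, with the Euclidean (L²) norm. -/
abbrev Cfg (N : ℕ) : Type := EuclideanSpace ℝ (Fin N × Fin 3)

/-- The coordinates of the `j`-th particle. -/
def proj {N : ℕ} (j : Fin N) (x : Cfg N) : R3 := WithLp.toLp 2 (fun k => x (j, k))

/-- The quantity `η^K(r; f) = sup_{|x| ≤ R} ∫_{B_r(x)} |f(y)| / |x-y|^p dy`. -/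
def etaK {ι : Type*} [Fintype ι] (p R : ℝ) (f : EuclideanSpace ℝ ι → ℝ) (r : ℝ) : ℝ≥0∞ :=
  ⨆ x : {x : EuclideanSpace ℝ ι // ‖x‖ ≤ R},
    ∫⁻ y in ball (x : EuclideanSpace ℝ ι) r,
      ENNReal.ofReal (|f y| / ‖(x : EuclideanSpace ℝ ι) - y‖ ^ p)

/-- The local Kato class with kernel exponent `p`: `K^n_loc` corresponds to `p = n - 2`,
and `K^{n,δ}_loc` to `p = n - 2 + δ`. -/
def KatoLoc {ι : Type*} [Fintype ι] (p : ℝ) (f : EuclideanSpace ℝ ι → ℝ) : Prop :=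
  ∀ R : ℝ, 0 < R → Tendsto (etaK p R f) (nhdsWithin 0 (Ioi 0)) (nhds 0)

namespace OBKL
variable {N : ℕ}

/-- index type of the complementary particles -/
abbrev cIdx (N : ℕ) (j : Fin N) : Type := {i : Fin N × Fin 3 // ¬ (i.1 = j)}

abbrev E2 (N : ℕ) (j : Fin N) : Type := EuclideanSpace ℝ (cIdx N j)

def eqJ (j : Fin N) : {i : Fin N × Fin 3 // i.1 = j} ≃ Fin 3 where
  toFun i := i.1.2
  invFun k := ⟨(j, k), rfl⟩
  left_inv := by rintro ⟨⟨j', k⟩, h⟩; subst h; rfl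
  right_inv k := rfl

def splitEquiv (j : Fin N) : Cfg N ≃ᵐ R3 × E2 N j :=
  (MeasurableEquiv.toLp 2 (Fin N × Fin 3 → ℝ)).symm.trans <|
    (MeasurableEquiv.piEquivPiSubtypeProd (fun _ : Fin N × Fin 3 => ℝ)
      (fun i => i.1 = j)).trans <|
    MeasurableEquiv.prodCongr
      ((MeasurableEquiv.piCongrLeft (fun _ => ℝ) (eqJ j)).trans
        (MeasurableEquiv.toLp 2 (Fin 3 → ℝ)).symm.symm)
      (MeasurableEquiv.toLp 2 (cIdx N j → ℝ)).symm.symm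

lemma splitEquiv_mp (j : Fin N) : MeasurePreserving (splitEquiv j) volume volume := by
  rw [Measure.volume_eq_prod]
  exact (EuclideanSpace.volume_preserving_symm_measurableEquiv_toLp _).trans <|
    ((volume_preserving_piEquivPiSubtypeProd (fun _ : Fin N × Fin 3 => ℝ)
      (fun i => i.1 = j)).trans <|
    ((volume_measurePreserving_piCongrLeft (fun _ => ℝ) (eqJ j)).trans
        (EuclideanSpace.volume_preserving_symm_measurableEquiv_toLp (Fin 3)).symm).prod
      (EuclideanSpace.volume_preserving_symm_measurableEquiv_toLp (cIdx N j)).symm)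

lemma splitEquiv_fst (j : Fin N) (y : Cfg N) : (splitEquiv j y).1 = proj j y := by
  ext k
  simp [splitEquiv, proj, MeasurableEquiv.piEquivPiSubtypeProd, eqJ,
    MeasurableEquiv.piCongrLeft, Equiv.piCongrLeft, Equiv.piCongrLeft',
    MeasurableEquiv.coe_toLp, MeasurableEquiv.coe_toLp_symm, MeasurableEquiv.prodCongr]

lemma splitEquiv_snd (j : Fin N) (y : Cfg N) (i : cIdx N j) :
    (splitEquiv j y).2 i = y i.1 := by
  simp [splitEquiv, MeasurableEquiv.piEquivPiSubtypeProd,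
    MeasurableEquiv.coe_toLp, MeasurableEquiv.coe_toLp_symm, MeasurableEquiv.prodCongr]

lemma norm_sq_euclid {κ : Type*} [Fintype κ] (x : EuclideanSpace ℝ κ) :
    ‖x‖ ^ 2 = ∑ i, (x i) ^ 2 := by
  rw [EuclideanSpace.norm_eq, Real.sq_sqrt (by positivity)]
  simp [Real.norm_eq_abs, sq_abs]

lemma splitEquiv_norm (j : Fin N) (y : Cfg N) :
    ‖y‖ ^ 2 = ‖(splitEquiv j y).1‖ ^ 2 + ‖(splitEquiv j y).2‖ ^ 2 := by
  rw [norm_sq_euclid, norm_sq_euclid, norm_sq_euclid]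
  rw [← Fintype.sum_subtype_add_sum_subtype (fun i : Fin N × Fin 3 => i.1 = j)
    (fun i => (y i) ^ 2)]
  have h1 : ∑ i : {i : Fin N × Fin 3 // i.1 = j}, (y i.1) ^ 2
      = ∑ k, ((splitEquiv j y).1 k) ^ 2 := by
    rw [← Equiv.sum_comp (eqJ j) (fun k => ((splitEquiv j y).1 k) ^ 2)]
    apply Finset.sum_congr rfl
    intro i _
    rw [splitEquiv_fst]
    rcases i with ⟨⟨j', k⟩, h⟩
    subst h
    rfl
  have h2 : ∑ i : cIdx N j, (y i.1) ^ 2 = ∑ i, ((splitEquiv j y).2 i) ^ 2 :=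
    Finset.sum_congr rfl fun i _ => by rw [splitEquiv_snd]
  rw [h1, h2]


def Kc (κ : Type*) [Fintype κ] (q : ℝ) : ℝ≥0∞ :=
  ∫⁻ c : EuclideanSpace ℝ κ, ENNReal.ofReal ((1 + ‖c‖ ^ 2) ^ (-(q / 2)))

lemma Kc_lt_top {κ : Type*} [Fintype κ] {q : ℝ} (hq : (Fintype.card κ : ℝ) < q) :
    Kc κ q < ∞ := by
  have h : Integrable (fun c : EuclideanSpace ℝ κ => ((1 : ℝ) + ‖c‖ ^ 2) ^ (-q / 2)) volume :=
    integrable_rpow_neg_one_add_norm_sq (by rwa [finrank_euclideanSpace])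
  have := h.lintegral_lt_top
  simpa [Kc, neg_div] using this

lemma Kc_congr {κ κ' : Type*} [Fintype κ] [Fintype κ'] (e : κ ≃ κ') (q : ℝ) :
    Kc κ q = Kc κ' q := by
  classical
  set E : EuclideanSpace ℝ κ ≃ᵐ EuclideanSpace ℝ κ' :=
    (MeasurableEquiv.toLp 2 (κ → ℝ)).symm.trans
      ((MeasurableEquiv.piCongrLeft (fun _ => ℝ) e).trans
        (MeasurableEquiv.toLp 2 (κ' → ℝ)).symm.symm) with hE
  have hmp : MeasurePreserving E volume volume :=
    (EuclideanSpace.volume_preserving_symm_measurableEquiv_toLp κ).trans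
      ((volume_measurePreserving_piCongrLeft (fun _ => ℝ) e).trans
        (EuclideanSpace.volume_preserving_symm_measurableEquiv_toLp κ').symm)
  have hnorm : ∀ c : EuclideanSpace ℝ κ, ‖E c‖ ^ 2 = ‖c‖ ^ 2 := by
    intro c
    rw [norm_sq_euclid, norm_sq_euclid]
    rw [← Equiv.sum_comp e (fun i' => ((E c : EuclideanSpace ℝ κ') i') ^ 2)]
    apply Finset.sum_congr rfl
    intro i _
    have : (E c : EuclideanSpace ℝ κ') (e i) = c i := by
      simp [hE, MeasurableEquiv.coe_toLp, MeasurableEquiv.coe_toLp_symm, MeasurableEquiv.piCongrLeft,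
        Equiv.piCongrLeft_apply_apply]
    rw [this]
  rw [Kc, Kc, hmp.lintegral_map_equiv
    (fun c => ENNReal.ofReal ((1 + ‖c‖ ^ 2) ^ (-(q / 2)))) E]
  exact lintegral_congr fun c => by rw [hnorm]

lemma scale {κ : Type*} [Fintype κ] (q : ℝ) {a : ℝ} (ha : 0 < a) :
    ∫⁻ b : EuclideanSpace ℝ κ, ENNReal.ofReal ((a ^ 2 + ‖b‖ ^ 2) ^ (-(q / 2)))
      = ENNReal.ofReal (a ^ ((Fintype.card κ : ℝ) - q)) * Kc κ q := by
  set d := Fintype.card κ with hd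
  have hmb : Measurable fun b : EuclideanSpace ℝ κ => (a ^ 2 + ‖b‖ ^ 2 : ℝ) :=
    (measurable_const.add ((measurable_norm).pow_const 2))
  have hm : Measurable fun b : EuclideanSpace ℝ κ =>
      ENNReal.ofReal ((a ^ 2 + ‖b‖ ^ 2) ^ (-(q / 2))) :=
    ENNReal.measurable_ofReal.comp (hmb.pow measurable_const)
  have hmap : Measure.map (a • ·) (volume : Measure (EuclideanSpace ℝ κ))
      = ENNReal.ofReal (|(a ^ d)⁻¹|) • volume := by
    rw [Measure.map_addHaar_smul volume (ne_of_gt ha), finrank_euclideanSpace]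
  have key : ∫⁻ c : EuclideanSpace ℝ κ,
      ENNReal.ofReal ((a ^ 2 + ‖a • c‖ ^ 2) ^ (-(q / 2)))
      = ENNReal.ofReal (|(a ^ d)⁻¹|) *
        ∫⁻ b : EuclideanSpace ℝ κ, ENNReal.ofReal ((a ^ 2 + ‖b‖ ^ 2) ^ (-(q / 2))) := by
    rw [← lintegral_map hm (measurable_const_smul a), hmap, lintegral_smul_measure, smul_eq_mul]
  have hpt : ∀ c : EuclideanSpace ℝ κ,
      ENNReal.ofReal ((a ^ 2 + ‖a • c‖ ^ 2) ^ (-(q / 2)))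
        = ENNReal.ofReal (a ^ (-q)) * ENNReal.ofReal ((1 + ‖c‖ ^ 2) ^ (-(q / 2))) := by
    intro c
    have h1 : ‖a • c‖ ^ 2 = a ^ 2 * ‖c‖ ^ 2 := by
      rw [norm_smul, mul_pow, Real.norm_eq_abs, sq_abs]
    have h2 : (a ^ 2 + ‖a • c‖ ^ 2 : ℝ) = a ^ 2 * (1 + ‖c‖ ^ 2) := by rw [h1]; ring
    have h3 : ((a ^ 2) * (1 + ‖c‖ ^ 2)) ^ (-(q / 2))
        = (a ^ 2) ^ (-(q / 2)) * (1 + ‖c‖ ^ 2) ^ (-(q / 2)) :=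
      Real.mul_rpow (by positivity) (by positivity)
    have h4 : ((a ^ 2 : ℝ)) ^ (-(q / 2)) = a ^ (-q) := by
      rw [← Real.rpow_natCast a 2, ← Real.rpow_mul ha.le]
      congr 1
      push_cast
      ring
    rw [h2, h3, h4, ENNReal.ofReal_mul (Real.rpow_nonneg ha.le _)]
  have hm1 : Measurable fun c : EuclideanSpace ℝ κ =>
      ENNReal.ofReal ((1 + ‖c‖ ^ 2) ^ (-(q / 2))) :=
    ENNReal.measurable_ofReal.comp
      ((measurable_const.add ((measurable_norm).pow_const 2)).pow measurable_const)
  have key2 : ENNReal.ofReal (a ^ (-q)) * Kc κ q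
      = ENNReal.ofReal (|(a ^ d)⁻¹|) *
        ∫⁻ b : EuclideanSpace ℝ κ, ENNReal.ofReal ((a ^ 2 + ‖b‖ ^ 2) ^ (-(q / 2))) := by
    rw [← key, lintegral_congr hpt, lintegral_const_mul _ hm1]
    rfl
  have hpos : (0 : ℝ) < a ^ d := pow_pos ha d
  have hinv : ENNReal.ofReal (a ^ d) * ENNReal.ofReal (|(a ^ d)⁻¹|) = 1 := by
    rw [abs_inv, abs_of_pos hpos, ← ENNReal.ofReal_mul hpos.le,
      mul_inv_cancel₀ (ne_of_gt hpos), ENNReal.ofReal_one]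
  have hcomb : ENNReal.ofReal (a ^ d) * ENNReal.ofReal (a ^ (-q))
      = ENNReal.ofReal (a ^ ((d : ℝ) - q)) := by
    rw [← ENNReal.ofReal_mul (le_of_lt hpos)]
    congr 1
    rw [← Real.rpow_natCast a d, ← Real.rpow_add ha, sub_eq_add_neg]
  calc ∫⁻ b : EuclideanSpace ℝ κ, ENNReal.ofReal ((a ^ 2 + ‖b‖ ^ 2) ^ (-(q / 2)))
      = (ENNReal.ofReal (a ^ d) * ENNReal.ofReal (|(a ^ d)⁻¹|)) *
        ∫⁻ b : EuclideanSpace ℝ κ, ENNReal.ofReal ((a ^ 2 + ‖b‖ ^ 2) ^ (-(q / 2))) := by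
        rw [hinv, one_mul]
    _ = ENNReal.ofReal (a ^ d) * (ENNReal.ofReal (a ^ (-q)) * Kc κ q) := by
        rw [mul_assoc, ← key2]
    _ = ENNReal.ofReal (a ^ ((d : ℝ) - q)) * Kc κ q := by rw [← mul_assoc, hcomb]


lemma rpow_neg_half (t : ℝ) (ht : 0 ≤ t) (q : ℝ) : t ^ (-q) = (t ^ 2) ^ (-(q / 2)) := by
  rw [← Real.rpow_natCast t 2, ← Real.rpow_mul ht]
  congr 1
  push_cast
  ring

lemma card_cIdx (j : Fin N) : Fintype.card (cIdx N j) = 3 * N - 3 := by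
  classical
  have h1 : Fintype.card {i : Fin N × Fin 3 // i.1 = j} = 3 :=
    (Fintype.card_congr (eqJ j)).trans (Fintype.card_fin 3)
  have h2 := Fintype.card_subtype_compl (fun i : Fin N × Fin 3 => i.1 = j)
  rw [h1] at h2
  have h2' : Fintype.card (cIdx N j) = Fintype.card (Fin N × Fin 3) - 3 := h2
  have h3 : Fintype.card (Fin N × Fin 3) = 3 * N := by simp [Fintype.card_prod]; ring
  omega

lemma core (hN : 1 ≤ N) (j : Fin N) {δ : ℝ} (hδ : 0 < δ) (g : R3 → ℝ≥0∞)
    (hg : Measurable g) (r : ℝ) :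
    ∫⁻ y in ball (0 : Cfg N) r,
        g (proj j y) * ENNReal.ofReal (‖y‖ ^ (-((3 * N : ℝ) - 2 + δ)))
      ≤ Kc (Fin (3 * (N - 1))) ((3 * N : ℝ) - 2 + δ) *
        ∫⁻ a in ball (0 : R3) r, g a * ENNReal.ofReal (‖a‖ ^ (-(1 + δ))) := by
  classical
  set q : ℝ := (3 * N : ℝ) - 2 + δ with hq
  set Kcst : ℝ≥0∞ := Kc (Fin (3 * (N - 1))) q with hKcst
  have hcard : (Fintype.card (cIdx N j) : ℝ) = 3 * (N : ℝ) - 3 := by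
    rw [card_cIdx]
    have h3 : 3 ≤ 3 * N := by omega
    push_cast [Nat.cast_sub h3]
    ring
  have hKeq : Kc (cIdx N j) q = Kcst := by
    refine Kc_congr (Fintype.equivOfCardEq ?_) q
    rw [card_cIdx, Fintype.card_fin]
    omega
  have hexp : (Fintype.card (cIdx N j) : ℝ) - q = -(1 + δ) := by
    rw [hcard, hq]; ring
  set Φ : R3 × E2 N j ≃ᵐ Cfg N := (splitEquiv j).symm with hΦ
  have hΦfst : ∀ w : R3 × E2 N j, proj j (Φ w) = w.1 := by
    intro w
    rw [← splitEquiv_fst j (Φ w)]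
    simp [hΦ]
  have hΦnorm : ∀ w : R3 × E2 N j, ‖Φ w‖ ^ 2 = ‖w.1‖ ^ 2 + ‖w.2‖ ^ 2 := by
    intro w
    rw [splitEquiv_norm j (Φ w)]
    simp [hΦ]
  -- indicator form
  rw [← lintegral_indicator measurableSet_ball]
  rw [(MeasurePreserving.symm _ (splitEquiv_mp j)).lintegral_map_equiv
    (fun y => (ball (0 : Cfg N) r).indicator
      (fun y => g (proj j y) * ENNReal.ofReal (‖y‖ ^ (-q))) y) Φ]
  -- pointwise bound by a product-shaped function
  have step1 : ∫⁻ w : R3 × E2 N j, (ball (0 : Cfg N) r).indicator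
        (fun y => g (proj j y) * ENNReal.ofReal (‖y‖ ^ (-q))) (Φ w)
      ≤ ∫⁻ w : R3 × E2 N j, (ball (0 : R3) r).indicator g w.1 *
          ENNReal.ofReal ((‖w.1‖ ^ 2 + ‖w.2‖ ^ 2) ^ (-(q / 2))) := by
    refine lintegral_mono fun w => ?_
    by_cases hw : Φ w ∈ ball (0 : Cfg N) r
    · rw [indicator_of_mem hw]
      have hlt : ‖Φ w‖ < r := by rwa [mem_ball_zero_iff] at hw
      have h1 : ‖w.1‖ ≤ ‖Φ w‖ := by
        refine le_of_pow_le_pow_left₀ two_ne_zero (norm_nonneg _) ?_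
        rw [hΦnorm w]
        nlinarith [sq_nonneg ‖w.2‖]
      have hw1 : w.1 ∈ ball (0 : R3) r :=
        mem_ball_zero_iff.2 (lt_of_le_of_lt h1 hlt)
      rw [indicator_of_mem hw1, hΦfst w]
      rw [rpow_neg_half _ (norm_nonneg _), hΦnorm w]
    · rw [indicator_of_notMem hw]
      exact zero_le
  refine le_trans step1 ?_
  -- Tonelli
  have hmeas_inner : ∀ a : R3, Measurable fun b : E2 N j =>
      ENNReal.ofReal ((‖a‖ ^ 2 + ‖b‖ ^ 2) ^ (-(q / 2))) := fun a =>
    ENNReal.measurable_ofReal.comp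
      ((measurable_const.add (measurable_norm.pow_const 2)).pow measurable_const)
  have hmeasG : Measurable fun w : R3 × E2 N j =>
      (ball (0 : R3) r).indicator g w.1 *
        ENNReal.ofReal ((‖w.1‖ ^ 2 + ‖w.2‖ ^ 2) ^ (-(q / 2))) := by
    refine Measurable.mul ((hg.indicator measurableSet_ball).comp measurable_fst) ?_
    exact ENNReal.measurable_ofReal.comp
      (((measurable_norm.comp measurable_fst).pow_const 2 |>.add
        ((measurable_norm.comp measurable_snd).pow_const 2)).pow measurable_const)
  rw [Measure.volume_eq_prod, lintegral_prod _ hmeasG.aemeasurable]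
  have step2 : ∀ a : R3, ∫⁻ b : E2 N j, (ball (0 : R3) r).indicator g a *
        ENNReal.ofReal ((‖a‖ ^ 2 + ‖b‖ ^ 2) ^ (-(q / 2)))
      = (ball (0 : R3) r).indicator g a *
        ∫⁻ b : E2 N j, ENNReal.ofReal ((‖a‖ ^ 2 + ‖b‖ ^ 2) ^ (-(q / 2))) := fun a =>
    lintegral_const_mul _ (hmeas_inner a)
  rw [lintegral_congr step2]
  -- the inner integral, a.e. in `a`
  have h0 : (volume : Measure R3) {(0 : R3)} = 0 := measure_singleton _
  have hne : ∀ᵐ a : R3, a ≠ (0 : R3) := by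
    rw [ae_iff]
    simpa using h0
  have step3 : ∀ᵐ a : R3, (ball (0 : R3) r).indicator g a *
        ∫⁻ b : E2 N j, ENNReal.ofReal ((‖a‖ ^ 2 + ‖b‖ ^ 2) ^ (-(q / 2)))
      = Kcst * ((ball (0 : R3) r).indicator g a * ENNReal.ofReal (‖a‖ ^ (-(1 + δ)))) := by
    filter_upwards [hne] with a ha
    have hna : 0 < ‖a‖ := norm_pos_iff.2 ha
    rw [scale q hna, hexp, hKeq]
    ring
  rw [lintegral_congr_ae step3, lintegral_const_mul _ ?hm]
  case hm =>
    exact (hg.indicator measurableSet_ball).mul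
      (ENNReal.measurable_ofReal.comp (measurable_norm.pow measurable_const))
  refine mul_le_mul_right (le_of_eq ?_) _
  rw [← lintegral_indicator measurableSet_ball]
  refine lintegral_congr fun a => ?_
  by_cases ha : a ∈ ball (0 : R3) r
  · rw [indicator_of_mem ha, indicator_of_mem ha]
  · rw [indicator_of_notMem ha, indicator_of_notMem ha, zero_mul]


lemma lint_translate {κ : Type*} [Fintype κ] (h : EuclideanSpace ℝ κ → ℝ≥0∞)
    (c : EuclideanSpace ℝ κ) (r : ℝ) :
    ∫⁻ z in ball c r, h z = ∫⁻ a in ball (0 : EuclideanSpace ℝ κ) r, h (a + c) := by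
  have hmp : MeasurePreserving (· + c) (volume : Measure (EuclideanSpace ℝ κ)) volume :=
    measurePreserving_add_right volume c
  have hemb : MeasurableEmbedding (· + c : EuclideanSpace ℝ κ → EuclideanSpace ℝ κ) :=
    (MeasurableEquiv.addRight c).measurableEmbedding
  have hpre : ((· + c) : EuclideanSpace ℝ κ → EuclideanSpace ℝ κ) ⁻¹' ball c r
      = ball (0 : EuclideanSpace ℝ κ) r := by
    ext a
    simp [mem_ball, dist_eq_norm]
  rw [← hmp.setLIntegral_comp_preimage_emb hemb h (ball c r), hpre]

lemma proj_null (j : Fin N) {A : Set R3} (hA : volume A = 0) :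
    (volume : Measure (Cfg N)) {y | proj j y ∈ A} = 0 := by
  obtain ⟨B, hAB, hBm, hB0⟩ := exists_measurable_superset_of_null hA
  have hset : {y : Cfg N | proj j y ∈ B} = (splitEquiv j) ⁻¹' (B ×ˢ (univ : Set (E2 N j))) := by
    ext y
    simp [Set.mem_prod, splitEquiv_fst]
  have hBnull : (volume : Measure (Cfg N)) {y | proj j y ∈ B} = 0 := by
    rw [hset, (splitEquiv_mp j).measure_preimage
      (hBm.prod MeasurableSet.univ).nullMeasurableSet]
    rw [Measure.volume_eq_prod, Measure.prod_prod, hB0, zero_mul]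
  exact measure_mono_null (fun y hy => hAB hy) hBnull

lemma ae_comp_proj {α : Type*} (j : Fin N) {F G : R3 → α}
    (h : ∀ᵐ z : R3, F z = G z) (c : R3) :
    ∀ᵐ y : Cfg N, F (proj j y + c) = G (proj j y + c) := by
  have hD : volume ((· + c) ⁻¹' {z : R3 | F z ≠ G z}) = 0 :=
    (measurePreserving_add_right volume c).quasiMeasurePreserving.preimage_null (by
      rw [ae_iff] at h; exact h)
  rw [ae_iff]
  exact measure_mono_null (fun y hy => hy) (proj_null j hD)

lemma ofReal_div_eq (s t q : ℝ) (hs : 0 ≤ s) (ht : 0 ≤ t) :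
    ENNReal.ofReal (s / t ^ q) = ENNReal.ofReal s * ENNReal.ofReal (t ^ (-q)) := by
  rw [Real.rpow_neg ht, div_eq_mul_inv, ENNReal.ofReal_mul hs]

lemma norm_proj_le (j : Fin N) (x : Cfg N) : ‖proj j x‖ ≤ ‖x‖ := by
  refine le_of_pow_le_pow_left₀ two_ne_zero (norm_nonneg _) ?_
  rw [splitEquiv_norm j x, splitEquiv_fst]
  nlinarith [sq_nonneg ‖(splitEquiv j x).2‖]

lemma main_j (hN : 1 ≤ N) (j : Fin N) {δ : ℝ} (hδ : 0 < δ) (f1 : R3 → ℝ)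
    (hf1 : Measurable f1) (x : Cfg N) (r : ℝ) :
    ∫⁻ y in ball (0 : Cfg N) r,
        ENNReal.ofReal (|f1 (proj j y + proj j x)| / ‖y‖ ^ ((3 * N : ℝ) - 2 + δ))
      ≤ Kc (Fin (3 * (N - 1))) ((3 * N : ℝ) - 2 + δ) *
        ∫⁻ z in ball (proj j x) r,
          ENNReal.ofReal (|f1 z| / ‖z - proj j x‖ ^ (1 + δ)) := by
  set q : ℝ := (3 * N : ℝ) - 2 + δ with hq
  set g : R3 → ℝ≥0∞ := fun a => ENNReal.ofReal (|f1 (a + proj j x)|) with hgdef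
  have hg : Measurable g :=
    ENNReal.measurable_ofReal.comp
      ((hf1.comp (measurable_add_const (proj j x))).abs)
  have lhs_eq : ∫⁻ y in ball (0 : Cfg N) r,
      ENNReal.ofReal (|f1 (proj j y + proj j x)| / ‖y‖ ^ q)
      = ∫⁻ y in ball (0 : Cfg N) r, g (proj j y) * ENNReal.ofReal (‖y‖ ^ (-q)) :=
    lintegral_congr fun y => ofReal_div_eq _ _ _ (abs_nonneg _) (norm_nonneg _)
  rw [lhs_eq]
  refine le_trans (core hN j hδ g hg r) ?_
  refine mul_le_mul_right (le_of_eq ?_) _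
  rw [lint_translate (fun z => ENNReal.ofReal (|f1 z| / ‖z - proj j x‖ ^ (1 + δ)))
    (proj j x) r]
  refine lintegral_congr fun a => ?_
  have : a + proj j x - proj j x = a := by abel
  rw [this, hgdef]
  exact (ofReal_div_eq _ _ _ (abs_nonneg _) (norm_nonneg _)).symm


lemma sum_ineq (hN : 1 ≤ N) {δ : ℝ} (hδ : 0 < δ) (f1 : R3 → ℝ)
    (hf1 : Measurable f1) (x : Cfg N) (r : ℝ) :
    (∑ j : Fin N, ∫⁻ y in ball (0 : Cfg N) r,
        ENNReal.ofReal (|f1 (proj j y + proj j x)| / ‖y‖ ^ ((3 * N : ℝ) - 2 + δ)))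
      ≤ Kc (Fin (3 * (N - 1))) ((3 * N : ℝ) - 2 + δ) *
        ∑ j : Fin N, ∫⁻ z in ball (proj j x) r,
          ENNReal.ofReal (|f1 z| / ‖z - proj j x‖ ^ (1 + δ)) := by
  rw [Finset.mul_sum]
  exact Finset.sum_le_sum fun j _ => main_j hN j hδ f1 hf1 x r

lemma measurable_proj (j : Fin N) : Measurable (proj j) := by
  unfold proj
  fun_prop

lemma div_le_div_nonneg_right {a b c : ℝ} (h : a ≤ b) (hc : 0 ≤ c) : a / c ≤ b / c := by
  rcases hc.eq_or_lt with hc0 | hc0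
  · simp [← hc0]
  · exact (div_le_div_iff_of_pos_right hc0).2 h

end OBKL

open OBKL

/-- **One-body Kato-class lifting** (inequality (14) in the proof of Corollary 2): the
integral of `∑ⱼ |f₁(yⱼ + xⱼ)|/|y|^{D-2+δ}` over `B_r(0) ⊆ ℝ^D` is controlled by a constant
(depending only on `N`, `δ`) times `∑ⱼ ∫_{B_r(xⱼ)} |f₁(y)|/|y - xⱼ|^{1+δ} dy`; consequently
`f₁ ∈ K^{3,δ}_loc` implies `x ↦ ∑ⱼ f₁(xⱼ) ∈ K^{D,δ}_loc`. -/


theorem one_body_kato_lifting (N : ℕ) (hN : 1 ≤ N) (δ : ℝ) (hδ : 0 < δ) :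
    (∃ C : ℝ, 0 < C ∧ ∀ f1 : R3 → ℝ, LocallyIntegrable f1 volume →
      ∀ x : Cfg N, ∀ r : ℝ, 0 < r →
        (∑ j : Fin N, ∫⁻ y in ball (0 : Cfg N) r,
            ENNReal.ofReal (|f1 (proj j y + proj j x)| / ‖y‖ ^ ((3 * N : ℝ) - 2 + δ)))
          ≤ ENNReal.ofReal C *
            ∑ j : Fin N, ∫⁻ z in ball (proj j x) r,
              ENNReal.ofReal (|f1 z| / ‖z - proj j x‖ ^ (1 + δ)))
    ∧ ∀ f1 : R3 → ℝ, LocallyIntegrable f1 volume → KatoLoc (1 + δ) f1 →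
        KatoLoc ((3 * N : ℝ) - 2 + δ) (fun x : Cfg N => ∑ j, f1 (proj j x)) := by
  classical
  set q : ℝ := (3 * N : ℝ) - 2 + δ with hq
  set K : ℝ≥0∞ := Kc (Fin (3 * (N - 1))) q with hK
  have hKfin : K < ∞ := by
    refine Kc_lt_top ?_
    rw [Fintype.card_fin]
    have h1 : (1 : ℕ) ≤ N := hN
    push_cast [Nat.cast_sub h1]
    simp only [hq]
    linarith
  set C : ℝ := K.toReal + 1 with hC
  have hCpos : 0 < C := by positivity
  have hKC : K ≤ ENNReal.ofReal C := by
    calc K = ENNReal.ofReal K.toReal := (ENNReal.ofReal_toReal hKfin.ne).symm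
      _ ≤ ENNReal.ofReal C := ENNReal.ofReal_le_ofReal (by rw [hC]; linarith)
  -- the quantitative inequality, for any locally integrable f1
  have part1 : ∀ f1 : R3 → ℝ, LocallyIntegrable f1 volume →
      ∀ x : Cfg N, ∀ r : ℝ, 0 < r →
        (∑ j : Fin N, ∫⁻ y in ball (0 : Cfg N) r,
            ENNReal.ofReal (|f1 (proj j y + proj j x)| / ‖y‖ ^ q))
          ≤ ENNReal.ofReal C *
            ∑ j : Fin N, ∫⁻ z in ball (proj j x) r,
              ENNReal.ofReal (|f1 z| / ‖z - proj j x‖ ^ (1 + δ)) := by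
    intro f1 hloc x r hr
    have hae : AEMeasurable f1 volume := hloc.aestronglyMeasurable.aemeasurable
    set G1 : R3 → ℝ := hae.mk f1 with hG1
    have hG1m : Measurable G1 := hae.measurable_mk
    have heq : ∀ᵐ z : R3, f1 z = G1 z := hae.ae_eq_mk
    have hL : ∀ j : Fin N, ∫⁻ y in ball (0 : Cfg N) r,
        ENNReal.ofReal (|f1 (proj j y + proj j x)| / ‖y‖ ^ q)
        = ∫⁻ y in ball (0 : Cfg N) r,
          ENNReal.ofReal (|G1 (proj j y + proj j x)| / ‖y‖ ^ q) := by
      intro j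
      refine lintegral_congr_ae (ae_restrict_of_ae ?_)
      filter_upwards [ae_comp_proj j heq (proj j x)] with y hy
      rw [hy]
    have hR : ∀ j : Fin N, ∫⁻ z in ball (proj j x) r,
        ENNReal.ofReal (|G1 z| / ‖z - proj j x‖ ^ (1 + δ))
        = ∫⁻ z in ball (proj j x) r,
          ENNReal.ofReal (|f1 z| / ‖z - proj j x‖ ^ (1 + δ)) := by
      intro j
      refine lintegral_congr_ae (ae_restrict_of_ae ?_)
      filter_upwards [heq] with z hz
      rw [hz]
    calc (∑ j : Fin N, ∫⁻ y in ball (0 : Cfg N) r,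
            ENNReal.ofReal (|f1 (proj j y + proj j x)| / ‖y‖ ^ q))
        = ∑ j : Fin N, ∫⁻ y in ball (0 : Cfg N) r,
            ENNReal.ofReal (|G1 (proj j y + proj j x)| / ‖y‖ ^ q) :=
          Finset.sum_congr rfl fun j _ => hL j
      _ ≤ K * ∑ j : Fin N, ∫⁻ z in ball (proj j x) r,
            ENNReal.ofReal (|G1 z| / ‖z - proj j x‖ ^ (1 + δ)) :=
          sum_ineq hN hδ G1 hG1m x r
      _ = K * ∑ j : Fin N, ∫⁻ z in ball (proj j x) r,
            ENNReal.ofReal (|f1 z| / ‖z - proj j x‖ ^ (1 + δ)) := by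
          rw [Finset.sum_congr rfl fun j _ => hR j]
      _ ≤ ENNReal.ofReal C * ∑ j : Fin N, ∫⁻ z in ball (proj j x) r,
            ENNReal.ofReal (|f1 z| / ‖z - proj j x‖ ^ (1 + δ)) :=
          mul_le_mul_left hKC _
  refine ⟨⟨C, hCpos, part1⟩, ?_⟩
  -- part 2
  intro f1 hloc hKato R hRpos
  have hae : AEMeasurable f1 volume := hloc.aestronglyMeasurable.aemeasurable
  set G1 : R3 → ℝ := hae.mk f1 with hG1
  have hG1m : Measurable G1 := hae.measurable_mk
  have heq : ∀ᵐ z : R3, f1 z = G1 z := hae.ae_eq_mk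
  have key : ∀ r : ℝ, 0 < r →
      etaK q R (fun x : Cfg N => ∑ j, f1 (proj j x)) r
        ≤ (ENNReal.ofReal C * N) * etaK (1 + δ) R f1 r := by
    intro r hr
    refine iSup_le ?_
    rintro ⟨x, hx⟩
    have hmeasj : ∀ j : Fin N, Measurable fun y : Cfg N =>
        ENNReal.ofReal (|G1 (proj j y)| / ‖x - y‖ ^ q) := by
      intro j
      refine ENNReal.measurable_ofReal.comp ?_
      exact (((hG1m.comp (measurable_proj j)).abs).div
        (((measurable_const.sub measurable_id).norm).pow measurable_const))
    calc ∫⁻ y in ball x r, ENNReal.ofReal (|(∑ j, f1 (proj j y))| / ‖x - y‖ ^ q)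
        = ∫⁻ y in ball x r, ENNReal.ofReal (|(∑ j, G1 (proj j y))| / ‖x - y‖ ^ q) := by
          refine lintegral_congr_ae (ae_restrict_of_ae ?_)
          have hall : ∀ᵐ y : Cfg N, ∀ j : Fin N, f1 (proj j y) = G1 (proj j y) := by
            rw [ae_all_iff]
            intro j
            have := ae_comp_proj j heq (0 : R3)
            simpa using this
          filter_upwards [hall] with y hy
          rw [Finset.sum_congr rfl fun j _ => hy j]
      _ ≤ ∫⁻ y in ball x r, ∑ j : Fin N,
            ENNReal.ofReal (|G1 (proj j y)| / ‖x - y‖ ^ q) := by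
          refine lintegral_mono fun y => ?_
          calc ENNReal.ofReal (|(∑ j, G1 (proj j y))| / ‖x - y‖ ^ q)
              ≤ ENNReal.ofReal ((∑ j, |G1 (proj j y)|) / ‖x - y‖ ^ q) :=
                ENNReal.ofReal_le_ofReal (div_le_div_nonneg_right
                  (Finset.abs_sum_le_sum_abs _ _)
                  (Real.rpow_nonneg (norm_nonneg _) _))
            _ = ENNReal.ofReal (∑ j : Fin N, |G1 (proj j y)| / ‖x - y‖ ^ q) := by
                rw [Finset.sum_div]
            _ = ∑ j : Fin N, ENNReal.ofReal (|G1 (proj j y)| / ‖x - y‖ ^ q) :=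
                ENNReal.ofReal_sum_of_nonneg fun j _ => by positivity
      _ = ∑ j : Fin N, ∫⁻ y in ball x r,
            ENNReal.ofReal (|G1 (proj j y)| / ‖x - y‖ ^ q) :=
          lintegral_finset_sum _ fun j _ => hmeasj j
      _ = ∑ j : Fin N, ∫⁻ w in ball (0 : Cfg N) r,
            ENNReal.ofReal (|G1 (proj j w + proj j x)| / ‖w‖ ^ q) := by
          refine Finset.sum_congr rfl fun j _ => ?_
          rw [lint_translate (fun z => ENNReal.ofReal (|G1 (proj j z)| / ‖x - z‖ ^ q)) x r]
          refine lintegral_congr fun w => ?_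
          have h1 : proj j (w + x) = proj j w + proj j x := rfl
          have h2 : ‖x - (w + x)‖ = ‖w‖ := by
            rw [show x - (w + x) = -w by abel, norm_neg]
          rw [h1, h2]
      _ ≤ K * ∑ j : Fin N, ∫⁻ z in ball (proj j x) r,
            ENNReal.ofReal (|G1 z| / ‖z - proj j x‖ ^ (1 + δ)) :=
          sum_ineq hN hδ G1 hG1m x r
      _ ≤ ENNReal.ofReal C * ∑ j : Fin N, etaK (1 + δ) R f1 r := by
          refine mul_le_mul' hKC (Finset.sum_le_sum fun j _ => ?_)
          have hGf : ∫⁻ z in ball (proj j x) r,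
              ENNReal.ofReal (|G1 z| / ‖z - proj j x‖ ^ (1 + δ))
              = ∫⁻ z in ball (proj j x) r,
                ENNReal.ofReal (|f1 z| / ‖(proj j x) - z‖ ^ (1 + δ)) := by
            refine lintegral_congr_ae (ae_restrict_of_ae ?_)
            filter_upwards [heq] with z hz
            rw [hz, norm_sub_rev]
          rw [hGf]
          have hxj : ‖proj j x‖ ≤ R := le_trans (norm_proj_le j x) hx
          exact le_iSup (fun x' : {x' : R3 // ‖x'‖ ≤ R} =>
            ∫⁻ z in ball (x' : R3) r,
              ENNReal.ofReal (|f1 z| / ‖(x' : R3) - z‖ ^ (1 + δ))) ⟨proj j x, hxj⟩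
      _ = (ENNReal.ofReal C * N) * etaK (1 + δ) R f1 r := by
          rw [Finset.sum_const, Finset.card_univ, Fintype.card_fin, nsmul_eq_mul]
          ring
  have hupper : Tendsto (fun r => (ENNReal.ofReal C * N) * etaK (1 + δ) R f1 r)
      (nhdsWithin 0 (Ioi 0)) (nhds 0) := by
    have h0 := hKato R hRpos
    have := ENNReal.Tendsto.const_mul (a := ENNReal.ofReal C * N) h0
      (Or.inr (by
        exact ENNReal.mul_ne_top ENNReal.ofReal_ne_top (ENNReal.natCast_ne_top N)))
    simpa using this
  refine tendsto_of_tendsto_of_tendsto_of_le_of_le' tendsto_const_nhds hupper ?_ ?_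
  · exact Eventually.of_forall fun r => zero_le
  · filter_upwards [self_mem_nhdsWithin] with r hr
    exact key r hr

end
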